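/- arXiv:1909.10930 — 2 statements merged into one kernel-verified Lean document; each statement's English description precedes it below -/
import Mathlib

section
/- For all real x ≥ 2, the sum over primes p ≤ x of (log p)/p equals log x + O(1); i.e., there exists a constant M such that for all x ≥ 2, |∑_{p ≤ x, p prime} (log p)/p − log x| ≤ M. -/
open Finset

lemma range_succ_eq_Iic (N : ℕ) : Finset.range (N+1) = Finset.Iic N := by
  ext x; simp [Nat.lt_succ_iff]

lemma theta_bound (N : ℕ) :
    (∑ p ∈ (Finset.Iic N).filter Nat.Prime, Real.log p) ≤ N * Real.log 4 := by
  have h1 : (∑ p ∈ (Finset.Iic N).filter Nat.Prime, Real.log p)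
      = Real.log (primorial N) := by
    rw [primorial, range_succ_eq_Iic]
    push_cast
    rw [Real.log_prod]
    intro p hp
    have := (Finset.mem_filter.mp hp).2.pos
    positivity
  rw [h1]
  calc Real.log (primorial N) ≤ Real.log ((4:ℕ)^N) := by
        apply Real.log_le_log (by exact_mod_cast (primorial_pos N))
        exact_mod_cast primorial_le_4_pow N
    _ = N * Real.log 4 := by push_cast; rw [Real.log_pow]

lemma logfac_upper (N : ℕ) :
    (∑ k ∈ Finset.Ico 1 (N+1), Real.log k) ≤ N * Real.log N := by
  calc (∑ k ∈ Finset.Ico 1 (N+1), Real.log k)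
      ≤ ∑ _k ∈ Finset.Ico 1 (N+1), Real.log N := by
        apply Finset.sum_le_sum
        intro k hk
        rw [Finset.mem_Ico] at hk
        apply Real.log_le_log (by exact_mod_cast hk.1)
        exact_mod_cast Nat.lt_succ_iff.mp hk.2
    _ = N * Real.log N := by
        rw [Finset.sum_const, Nat.card_Ico]
        simp [nsmul_eq_mul]

lemma logfac_lower (N : ℕ) :
    (N:ℝ) * Real.log N - N ≤ ∑ k ∈ Finset.Ico 1 (N+1), Real.log k := by
  induction N with
  | zero => simp
  | succ n ih =>
    rw [Finset.sum_Ico_succ_top (by omega)]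
    have key : (n+1:ℝ) * Real.log (n+1) - (n+1) ≤
        ((n:ℝ) * Real.log n - n) + Real.log (n+1) := by
      have h2 : (n:ℝ) * Real.log (n+1) - (n:ℝ) * Real.log n ≤ 1 := by
        rcases Nat.eq_zero_or_pos n with h | h
        · simp [h]
        · have hn : (0:ℝ) < n := by exact_mod_cast h
          have : Real.log ((n+1:ℝ)/n) ≤ (n+1:ℝ)/n - 1 :=
            Real.log_le_sub_one_of_pos (by positivity)
          rw [Real.log_div (by positivity) (by positivity)] at this
          have h3 : (n+1:ℝ)/n - 1 = 1/n := by field_simp; ring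
          rw [h3] at this
          calc (n:ℝ) * Real.log (n+1) - (n:ℝ) * Real.log n
              = n * (Real.log (n+1) - Real.log n) := by ring
            _ ≤ n * (1/n) := by
                apply mul_le_mul_of_nonneg_left this (le_of_lt hn)
            _ = 1 := by field_simp
      nlinarith [h2]
    calc (↑(n+1):ℝ) * Real.log ↑(n+1) - ↑(n+1)
        ≤ ((n:ℝ) * Real.log n - n) + Real.log (n+1) := by push_cast at key ⊢; linarith
      _ ≤ (∑ k ∈ Finset.Ico 1 (n+1), Real.log k) + Real.log ↑(n+1) := by
          push_cast; linarith [ih]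

lemma primeFactors_factorial (N : ℕ) :
    (Nat.factorial N).primeFactors = (Finset.Iic N).filter Nat.Prime := by
  ext p
  simp only [Nat.mem_primeFactors, Finset.mem_filter, Finset.mem_Iic]
  constructor
  · rintro ⟨hp, hdvd, -⟩
    exact ⟨(Nat.Prime.dvd_factorial hp).mp hdvd, hp⟩
  · rintro ⟨hle, hp⟩
    exact ⟨hp, (Nat.Prime.dvd_factorial hp).mpr hle, Nat.factorial_ne_zero N⟩

lemma legendre_identity (N : ℕ) (hN : 1 ≤ N) :
    (∑ k ∈ Finset.Ico 1 (N+1), Real.log k)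
      = ∑ p ∈ (Finset.Iic N).filter Nat.Prime,
          ((∑ i ∈ Finset.Ico 1 (N+1), N / p^i : ℕ) : ℝ) * Real.log p := by
  have hfac : ((Nat.factorial N : ℕ) : ℝ) = ∏ k ∈ Finset.Ico 1 (N+1), (k:ℝ) := by
    rw [← Finset.prod_Ico_id_eq_factorial]; push_cast; rfl
  have lhs : (∑ k ∈ Finset.Ico 1 (N+1), Real.log k) = Real.log (Nat.factorial N) := by
    rw [hfac, Real.log_prod]
    intro k hk
    have := (Finset.mem_Ico.mp hk).1
    positivity
  rw [lhs]
  have hprod : (Nat.factorial N : ℕ) = ∏ p ∈ (Nat.factorial N).primeFactors, p ^ (Nat.factorial N).factorization p := by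
    conv_lhs => rw [← Nat.factorization_prod_pow_eq_self (Nat.factorial_ne_zero N)]
    rfl
  have : Real.log (Nat.factorial N) = ∑ p ∈ (Nat.factorial N).primeFactors,
      ((Nat.factorial N).factorization p : ℝ) * Real.log p := by
    conv_lhs => rw [hprod]
    push_cast
    rw [Real.log_prod]
    · apply Finset.sum_congr rfl
      intro p hp
      rw [Real.log_pow]
    · intro p hp
      have := (Nat.prime_of_mem_primeFactors hp).pos
      positivity
  rw [this, primeFactors_factorial]
  apply Finset.sum_congr rfl
  intro p hp
  simp only [Finset.mem_filter, Finset.mem_Iic] at hp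
  congr 2
  haveI : Fact p.Prime := ⟨hp.2⟩
  rw [Nat.factorization_def _ hp.2]
  exact padicValNat_factorial (lt_of_lt_of_le (Nat.log_lt_self p (by omega)) (by omega))

lemma summable_aux : Summable (fun n : ℕ => 4 * Real.sqrt n / (n:ℝ)^2) := by
  have h : ∀ n : ℕ, 4 * Real.sqrt n / (n:ℝ)^2 = 4 * (1 / (n:ℝ)^((3:ℝ)/2)) := by
    intro n
    rcases Nat.eq_zero_or_pos n with h | h
    · simp [h, Real.zero_rpow (by norm_num : (3:ℝ)/2 ≠ 0)]
    · have hn : (0:ℝ) < n := by exact_mod_cast h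
      rw [Real.sqrt_eq_rpow]
      rw [show ((n:ℝ)^2 : ℝ) = (n:ℝ)^((2:ℝ)) by rw [← Real.rpow_natCast (n:ℝ) 2]; norm_num]
      rw [mul_div_assoc, ← Real.rpow_sub hn, mul_one_div]
      norm_num
      rw [Real.rpow_neg (le_of_lt hn)]
      ring
  apply Summable.congr _ (fun n => (h n).symm)
  exact (Real.summable_one_div_nat_rpow.mpr (by norm_num)).mul_left 4

lemma log_le_two_sqrt {x : ℝ} (hx : 1 ≤ x) : Real.log x ≤ 2 * Real.sqrt x := by
  have h0 : (0:ℝ) < x := by linarith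
  have h1 : Real.log (Real.sqrt x) = Real.log x / 2 := Real.log_sqrt (le_of_lt h0)
  have h2 : Real.log (Real.sqrt x) ≤ Real.sqrt x - 1 :=
    Real.log_le_sub_one_of_pos (Real.sqrt_pos.mpr h0)
  have h3 : Real.sqrt x ≥ 0 := Real.sqrt_nonneg x
  linarith [h1 ▸ h2]

-- tail geometric bound
lemma tail_bound (N p : ℕ) (hp : 2 ≤ p) (hN : 1 ≤ N) :
    (∑ i ∈ Finset.Ico 2 (N+1), (N:ℝ) / p^i) ≤ (N:ℝ) * (2 / (p:ℝ)^2) := by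
  have hp0 : (0:ℝ) < p := by exact_mod_cast (by omega : 0 < p)
  set r : ℝ := 1 / p with hr
  have hr0 : 0 ≤ r := by positivity
  have hr1 : r < 1 := by
    rw [hr, div_lt_one hp0]; exact_mod_cast (by omega : 1 < p)
  have step1 : (∑ i ∈ Finset.Ico 2 (N+1), (N:ℝ) / p^i)
      = (N:ℝ) * ∑ i ∈ Finset.Ico 2 (N+1), r^i := by
    rw [Finset.mul_sum]
    apply Finset.sum_congr rfl
    intro i _
    rw [hr, div_pow, one_pow]
    ring
  rw [step1]
  have step2 : (∑ i ∈ Finset.Ico 2 (N+1), r^i) ≤ r^2 * (1-r)⁻¹ := by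
    rw [Finset.sum_Ico_eq_sum_range]
    have : ∀ k, r^(2+k) = r^2 * r^k := fun k => pow_add r 2 k
    calc (∑ k ∈ Finset.range (N+1-2), r^(2+k))
        = ∑ k ∈ Finset.range (N+1-2), r^2 * r^k := by
          apply Finset.sum_congr rfl; intro k _; exact this k
      _ = r^2 * ∑ k ∈ Finset.range (N+1-2), r^k := by rw [Finset.mul_sum]
      _ ≤ r^2 * (1-r)⁻¹ := by
          apply mul_le_mul_of_nonneg_left _ (by positivity)
          rw [← tsum_geometric_of_lt_one hr0 hr1]
          exact Summable.sum_le_tsum _ (fun i _ => by positivity) (summable_geometric_of_lt_one hr0 hr1)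
  have step3 : r^2 * (1-r)⁻¹ ≤ 2 / (p:ℝ)^2 := by
    have hp2 : (2:ℝ) ≤ p := by exact_mod_cast hp
    have h1r : (1:ℝ)/2 ≤ 1 - r := by
      rw [hr]
      have : (1:ℝ)/p ≤ 1/2 := by
        apply div_le_div_of_nonneg_left (by norm_num) (by norm_num) hp2
      linarith
    have : (1-r)⁻¹ ≤ 2 := by
      rw [inv_le_comm₀ (by linarith) (by norm_num)]
      linarith
    calc r^2 * (1-r)⁻¹ ≤ r^2 * 2 := by
          apply mul_le_mul_of_nonneg_left this (by positivity)
      _ = 2 / (p:ℝ)^2 := by rw [hr]; field_simp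
  calc (N:ℝ) * ∑ i ∈ Finset.Ico 2 (N+1), r^i ≤ (N:ℝ) * (r^2 * (1-r)⁻¹) := by
        apply mul_le_mul_of_nonneg_left step2 (by positivity)
    _ ≤ (N:ℝ) * (2/(p:ℝ)^2) := by
        apply mul_le_mul_of_nonneg_left step3 (by positivity)

noncomputable def mertC : ℝ := ∑' n : ℕ, 4 * Real.sqrt n / (n:ℝ)^2

lemma mertC_nonneg : 0 ≤ mertC :=
  tsum_nonneg (fun n => by positivity)

lemma mertens_nat (N : ℕ) (hN : 2 ≤ N) :
    |(∑ p ∈ (Finset.Iic N).filter Nat.Prime, Real.log p / p) - Real.log N|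
      ≤ Real.log 4 + (1 + mertC) := by
  set P := (Finset.Iic N).filter Nat.Prime with hP
  set S := ∑ p ∈ P, Real.log p / p with hS
  have hN1 : 1 ≤ N := by omega
  have hNpos : (0:ℝ) < N := by exact_mod_cast (by omega : 0 < N)
  have hprime : ∀ p ∈ P, p.Prime ∧ p ≤ N := by
    intro p hp
    simp only [hP, Finset.mem_filter, Finset.mem_Iic] at hp
    exact ⟨hp.2, hp.1⟩
  -- upper bound
  have upper : (N:ℝ) * S ≤ (N:ℝ) * Real.log N + (N:ℝ) * Real.log 4 := by
    have h1 : (N:ℝ) * S = ∑ p ∈ P, ((N:ℝ)/p) * Real.log p := by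
      rw [hS, Finset.mul_sum]
      apply Finset.sum_congr rfl
      intro p _
      ring
    rw [h1]
    have h2 : ∑ p ∈ P, ((N:ℝ)/p) * Real.log p ≤
        ∑ p ∈ P, (((∑ i ∈ Finset.Ico 1 (N+1), N / p^i : ℕ) : ℝ) + 1) * Real.log p := by
      apply Finset.sum_le_sum
      intro p hp
      obtain ⟨hpp, hple⟩ := hprime p hp
      have hp2 : 2 ≤ p := hpp.two_le
      have hppos : (0:ℝ) < p := by exact_mod_cast hpp.pos
      have hlog : 0 ≤ Real.log p := Real.log_nonneg (by exact_mod_cast hpp.one_lt.le)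
      apply mul_le_mul_of_nonneg_right _ hlog
      have hnat : N < (N/p + 1) * p := by
        have h3 := Nat.div_add_mod N p
        have h4 : N % p < p := Nat.mod_lt N hpp.pos
        nlinarith [h3, h4]
      have hcast : (N:ℝ) < ((N/p : ℕ) + 1) * p := by exact_mod_cast hnat
      have h5 : (N:ℝ)/p ≤ ((N/p : ℕ) : ℝ) + 1 := by
        rw [div_le_iff₀ hppos]
        linarith
      have h6 : (N/p : ℕ) ≤ ∑ i ∈ Finset.Ico 1 (N+1), N / p^i := by
        have : (1:ℕ) ∈ Finset.Ico 1 (N+1) := by simp; omega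
        calc N/p = N/p^1 := by rw [pow_one]
          _ ≤ ∑ i ∈ Finset.Ico 1 (N+1), N / p^i :=
            Finset.single_le_sum (f := fun i => N / p^i) (fun i _ => Nat.zero_le _) this
      have h6' : ((N/p : ℕ) : ℝ) ≤ ((∑ i ∈ Finset.Ico 1 (N+1), N / p^i : ℕ) : ℝ) := by
        exact_mod_cast h6
      linarith
    have h3 : ∑ p ∈ P, (((∑ i ∈ Finset.Ico 1 (N+1), N / p^i : ℕ) : ℝ) + 1) * Real.log p
        = (∑ k ∈ Finset.Ico 1 (N+1), Real.log k) + ∑ p ∈ P, Real.log p := by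
      rw [legendre_identity N hN1]
      rw [← Finset.sum_add_distrib]
      apply Finset.sum_congr rfl
      intro p _
      ring
    calc ∑ p ∈ P, ((N:ℝ)/p) * Real.log p
        ≤ (∑ k ∈ Finset.Ico 1 (N+1), Real.log k) + ∑ p ∈ P, Real.log p := by
          rw [← h3]; exact h2
      _ ≤ (N:ℝ) * Real.log N + (N:ℝ) * Real.log 4 :=
          add_le_add (logfac_upper N) (theta_bound N)
  -- lower bound
  have lower : (N:ℝ) * Real.log N - N ≤ (N:ℝ) * S + (N:ℝ) * mertC := by
    have key : (∑ k ∈ Finset.Ico 1 (N+1), Real.log k)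
        ≤ ∑ p ∈ P, (((N:ℝ)/p) * Real.log p + (N:ℝ) * (4 * Real.sqrt p / (p:ℝ)^2)) := by
      rw [legendre_identity N hN1]
      apply Finset.sum_le_sum
      intro p hp
      obtain ⟨hpp, hple⟩ := hprime p hp
      have hp2 : 2 ≤ p := hpp.two_le
      have hppos : (0:ℝ) < p := by exact_mod_cast hpp.pos
      have hlog : 0 ≤ Real.log p := Real.log_nonneg (by exact_mod_cast hpp.one_lt.le)
      -- e_p ≤ N/p + N*(2/p^2)
      have hsplit : (∑ i ∈ Finset.Ico 1 (N+1), N / p^i : ℕ)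
          = N/p^1 + ∑ i ∈ Finset.Ico 2 (N+1), N / p^i :=
        Finset.sum_eq_sum_Ico_succ_bot (by omega) _
      have hep : ((∑ i ∈ Finset.Ico 1 (N+1), N / p^i : ℕ) : ℝ)
          ≤ (N:ℝ)/p + (N:ℝ) * (2/(p:ℝ)^2) := by
        rw [hsplit]
        push_cast
        have t1 : ((N/p^1 : ℕ) : ℝ) ≤ (N:ℝ)/p := by
          rw [pow_one]
          exact Nat.cast_div_le
        have t2 : ((∑ i ∈ Finset.Ico 2 (N+1), N / p^i : ℕ) : ℝ)
            ≤ (N:ℝ) * (2/(p:ℝ)^2) := by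
          calc ((∑ i ∈ Finset.Ico 2 (N+1), N / p^i : ℕ) : ℝ)
              = ∑ i ∈ Finset.Ico 2 (N+1), ((N / p^i : ℕ) : ℝ) := by push_cast; rfl
            _ ≤ ∑ i ∈ Finset.Ico 2 (N+1), (N:ℝ) / (p:ℝ)^i := by
                apply Finset.sum_le_sum
                intro i _
                calc ((N / p^i : ℕ) : ℝ) ≤ (N:ℝ)/((p^i : ℕ) : ℝ) := Nat.cast_div_le
                  _ = (N:ℝ)/(p:ℝ)^i := by push_cast; rfl
            _ ≤ (N:ℝ) * (2/(p:ℝ)^2) := tail_bound N p hp2 hN1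
        push_cast at t2 ⊢
        linarith
      have hlog2 : Real.log p ≤ 2 * Real.sqrt p :=
        log_le_two_sqrt (by exact_mod_cast hpp.one_lt.le)
      calc ((∑ i ∈ Finset.Ico 1 (N+1), N / p^i : ℕ) : ℝ) * Real.log p
          ≤ ((N:ℝ)/p + (N:ℝ) * (2/(p:ℝ)^2)) * Real.log p :=
            mul_le_mul_of_nonneg_right hep hlog
        _ = ((N:ℝ)/p) * Real.log p + (N:ℝ) * (2 * Real.log p /(p:ℝ)^2) := by ring
        _ ≤ ((N:ℝ)/p) * Real.log p + (N:ℝ) * (4 * Real.sqrt p / (p:ℝ)^2) := by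
            have : 2 * Real.log p /(p:ℝ)^2 ≤ 4 * Real.sqrt p / (p:ℝ)^2 := by
              apply div_le_div_of_nonneg_right _ (by positivity)
              linarith
            have hNn : (0:ℝ) ≤ N := le_of_lt hNpos
            nlinarith [this]
    have key2 : ∑ p ∈ P, (((N:ℝ)/p) * Real.log p + (N:ℝ) * (4 * Real.sqrt p / (p:ℝ)^2))
        = (N:ℝ) * S + (N:ℝ) * ∑ p ∈ P, 4 * Real.sqrt p / (p:ℝ)^2 := by
      rw [Finset.sum_add_distrib, hS, Finset.mul_sum, Finset.mul_sum]
      congr 1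
      apply Finset.sum_congr rfl
      intro p _
      ring
    have key3 : (∑ p ∈ P, 4 * Real.sqrt p / (p:ℝ)^2) ≤ mertC :=
      Summable.sum_le_tsum P (fun n _ => by positivity) summable_aux
    calc (N:ℝ) * Real.log N - N ≤ ∑ k ∈ Finset.Ico 1 (N+1), Real.log k := logfac_lower N
      _ ≤ (N:ℝ) * S + (N:ℝ) * ∑ p ∈ P, 4 * Real.sqrt p / (p:ℝ)^2 := by
          rw [← key2]; exact key
      _ ≤ (N:ℝ) * S + (N:ℝ) * mertC := by
          have := mul_le_mul_of_nonneg_left key3 (le_of_lt hNpos)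
          linarith
  rw [abs_le]
  constructor
  · have h : (N:ℝ) * (Real.log N - (1 + mertC)) ≤ (N:ℝ) * S := by nlinarith [lower]
    have h2 : Real.log N - (1 + mertC) ≤ S := le_of_mul_le_mul_left h hNpos
    have hl4 : 0 ≤ Real.log 4 := Real.log_nonneg (by norm_num)
    linarith
  · have h : (N:ℝ) * S ≤ (N:ℝ) * (Real.log N + Real.log 4) := by nlinarith [upper]
    have h2 : S ≤ Real.log N + Real.log 4 := le_of_mul_le_mul_left h hNpos
    have := mertC_nonneg
    linarith

theorem mertens_first :
    ∃ M : ℝ, ∀ x : ℝ, 2 ≤ x →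
      |(∑ p ∈ (Finset.Iic ⌊x⌋₊).filter Nat.Prime, Real.log p / p) - Real.log x| ≤ M := by
  refine ⟨Real.log 4 + (1 + mertC) + Real.log 2, ?_⟩
  intro x hx
  set N := ⌊x⌋₊ with hNdef
  have hN2 : 2 ≤ N := Nat.le_floor (by exact_mod_cast hx)
  have hNx : (N:ℝ) ≤ x := Nat.floor_le (by linarith)
  have hxN : x < N + 1 := Nat.lt_floor_add_one x
  have hN1 : (1:ℝ) ≤ N := by exact_mod_cast (by omega : 1 ≤ N)
  have hNpos : (0:ℝ) < N := by linarith
  have hlogle : Real.log N ≤ Real.log x := Real.log_le_log hNpos hNx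
  have hlogup : Real.log x ≤ Real.log 2 + Real.log N := by
    have hx2N : x ≤ 2 * N := by linarith
    calc Real.log x ≤ Real.log (2 * N) := Real.log_le_log (by linarith) hx2N
      _ = Real.log 2 + Real.log N := Real.log_mul (by norm_num) (by positivity)
  have hint := mertens_nat N hN2
  set S := ∑ p ∈ (Finset.Iic N).filter Nat.Prime, Real.log p / p
  have habs : |S - Real.log x| ≤ |S - Real.log N| + |Real.log N - Real.log x| := by
    calc |S - Real.log x| = |(S - Real.log N) + (Real.log N - Real.log x)| := by ring_nf
      _ ≤ |S - Real.log N| + |Real.log N - Real.log x| := abs_add_le _ _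
  have h2 : |Real.log N - Real.log x| ≤ Real.log 2 := by
    rw [abs_le]
    constructor <;> linarith
  calc |S - Real.log x| ≤ |S - Real.log N| + |Real.log N - Real.log x| := habs
    _ ≤ Real.log 4 + (1 + mertC) + Real.log 2 := by linarith
end

section
/- For every natural number m ≥ 1, with a = log 2: ∫_{0}^{1/2} (log(1−t))^m / t dt = (−a)^{m+1} + (−1)^m m! ζ(m+1) + (−1)^{m−1} ∑_{s=1}^{m} (m!/(m−s)!) a^{m−s} Li_{s+1}(1/2). -/
open Finset Real

/-- The polylogarithm `Li_n(x) = ∑_{k ≥ 1} x^k / k^n`. -/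
noncomputable def polylog (n : ℕ) (x : ℝ) : ℝ := ∑' k : ℕ, x ^ (k + 1) / ((k : ℝ) + 1) ^ n

open MeasureTheory intervalIntegral


/-- Inner sum appearing in the antiderivative of `x^k (log x)^m`. -/
noncomputable def Saux (m k : ℕ) : ℝ :=
  ∑ j ∈ Finset.range (m+1),
    (-1:ℝ)^j * (m.descFactorial j : ℝ) * (-(Real.log 2))^(m-j) / ((k:ℝ)+1)^(j+1)

noncomputable def caux (m k : ℕ) : ℝ :=
  (-1:ℝ)^m * (m.factorial : ℝ) / ((k:ℝ)+1)^(m+1) - (1/2:ℝ)^(k+1) * Saux m k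

lemma kpos (k : ℕ) : (0:ℝ) < (k:ℝ) + 1 := by positivity

lemma Saux_succ (m k : ℕ) :
    Saux (m+1) k = (-(Real.log 2))^(m+1) / ((k:ℝ)+1)
      - (((m:ℝ)+1)/((k:ℝ)+1)) * Saux m k := by
  have hk := (kpos k).ne'
  unfold Saux
  rw [Finset.sum_range_succ']
  have h1 : ∀ i ∈ Finset.range (m+1),
      (-1:ℝ)^(i+1) * ((m+1).descFactorial (i+1) : ℝ) * (-(Real.log 2))^(m+1-(i+1)) / ((k:ℝ)+1)^(i+1+1)
      = -((((m:ℝ)+1)/((k:ℝ)+1)) *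
          ((-1:ℝ)^i * (m.descFactorial i : ℝ) * (-(Real.log 2))^(m-i) / ((k:ℝ)+1)^(i+1))) := by
    intro i _
    rw [Nat.succ_descFactorial_succ, Nat.succ_sub_succ]
    push_cast
    rw [pow_succ ((k:ℝ)+1) (i+1), pow_succ (-1:ℝ) i]
    field_simp
  rw [Finset.sum_congr rfl h1, Finset.sum_neg_distrib, ← Finset.mul_sum]
  simp
  ring


lemma Jval (m k : ℕ) :
    ∫ x in (1/2:ℝ)..1, x^k * (Real.log x)^m = caux m k := by
  induction m with
  | zero =>
      simp only [pow_zero, mul_one, integral_pow, caux, Saux]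
      have hk := (kpos k).ne'
      simp [Nat.descFactorial]
      try field_simp
      try ring
  | succ m ih =>
      have hk := (kpos k).ne'
      have hsub : Set.uIcc (1/2:ℝ) 1 ⊆ {x : ℝ | 0 < x} := by
        rw [Set.uIcc_of_le (by norm_num)]
        intro x hx
        exact lt_of_lt_of_le (by norm_num) hx.1
      have hu : ∀ x ∈ Set.uIcc (1/2:ℝ) 1,
          HasDerivAt (fun x => (Real.log x)^(m+1))
            ((((m:ℝ)+1) * (Real.log x)^m) * x⁻¹) x := by
        intro x hx
        have hx0 : x ≠ 0 := (hsub hx).ne'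
        have := (Real.hasDerivAt_log hx0).pow (m+1)
        simpa [Pi.pow_def] using this
      have hv : ∀ x ∈ Set.uIcc (1/2:ℝ) 1,
          HasDerivAt (fun x => x^(k+1)/((k:ℝ)+1)) (x^k) x := by
        intro x _
        have := (hasDerivAt_pow (k+1) x).div_const ((k:ℝ)+1)
        refine this.congr_deriv ?_
        field_simp
        push_cast
        ring
      have hu' : IntervalIntegrable (fun x => (((m:ℝ)+1) * (Real.log x)^m) * x⁻¹)
          MeasureTheory.volume (1/2:ℝ) 1 := by
        apply ContinuousOn.intervalIntegrable
        exact ((continuousOn_const.mul ((Real.continuousOn_log.mono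
          (fun x hx => (hsub hx).ne')).pow m)).mul
          (ContinuousOn.inv₀ continuousOn_id (fun x hx => (hsub hx).ne')))
      have hv' : IntervalIntegrable (fun x : ℝ => x^k) MeasureTheory.volume (1/2:ℝ) 1 :=
        (continuous_pow k).intervalIntegrable _ _
      have hIBP := intervalIntegral.integral_mul_deriv_eq_deriv_mul hu hv hu' hv'
      have hcongr1 : ∫ x in (1/2:ℝ)..1, x^k * (Real.log x)^(m+1)
          = ∫ x in (1/2:ℝ)..1, (Real.log x)^(m+1) * x^k := by
        apply intervalIntegral.integral_congr
        intro x _; ring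
      have hcongr2 : ∫ x in (1/2:ℝ)..1, (((m:ℝ)+1) * (Real.log x)^m) * x⁻¹ * (x^(k+1)/((k:ℝ)+1))
          = ∫ x in (1/2:ℝ)..1, (((m:ℝ)+1)/((k:ℝ)+1)) * (x^k * (Real.log x)^m) := by
        apply intervalIntegral.integral_congr
        intro x hx
        have hx0 : x ≠ 0 := (hsub hx).ne'
        field_simp
        ring
      rw [hcongr1, hIBP, hcongr2, intervalIntegral.integral_const_mul, ih]
      simp only [caux]
      rw [Saux_succ]
      have hlog : Real.log (1/2:ℝ) = -(Real.log 2) := by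
        rw [one_div, Real.log_inv]
      rw [hlog]
      simp only [Real.log_one, caux]
      rw [Nat.factorial_succ]
      push_cast
      rw [pow_succ (-1:ℝ) m, pow_succ ((k:ℝ)+1) (m+1)]
      field_simp
      ring

lemma summable_geo_pow (n : ℕ) :
    Summable (fun k : ℕ => (1/2:ℝ)^(k+1) / ((k:ℝ)+1)^n) := by
  have hg : Summable (fun k : ℕ => (1/2:ℝ)^(k+1)) := by
    simpa [pow_succ] using summable_geometric_two.mul_right (1/2:ℝ)
  apply Summable.of_nonneg_of_le (fun k => by positivity) _ hg
  intro k
  rw [div_le_iff₀ (by positivity)]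
  calc (1/2:ℝ)^(k+1) = (1/2:ℝ)^(k+1) * 1 := by ring
    _ ≤ (1/2:ℝ)^(k+1) * ((k:ℝ)+1)^n := by
        apply mul_le_mul_of_nonneg_left _ (by positivity)
        exact one_le_pow₀ (by linarith [Nat.cast_nonneg (α := ℝ) k])

lemma summable_inv_pow {n : ℕ} (hn : 2 ≤ n) :
    Summable (fun k : ℕ => (1:ℝ)/((k:ℝ)+1)^n) := by
  have := (summable_one_div_nat_pow (p := n)).mpr hn
  have h2 := (summable_nat_add_iff 1).mpr this
  simpa using h2

lemma half_Saux (m k : ℕ) : (1/2:ℝ)^(k+1) * Saux m k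
    = ∑ j ∈ Finset.range (m+1),
        ((-1:ℝ)^j * (m.descFactorial j : ℝ) * (-(Real.log 2))^(m-j))
          * ((1/2:ℝ)^(k+1)/((k:ℝ)+1)^(j+1)) := by
  unfold Saux
  rw [Finset.mul_sum]
  refine Finset.sum_congr rfl (fun j _ => ?_)
  ring

lemma summable_caux {m : ℕ} (hm : 1 ≤ m) : Summable (caux m) := by
  unfold caux
  apply Summable.sub
  · have := (summable_inv_pow (n := m+1) (by omega)).mul_left ((-1:ℝ)^m * (m.factorial : ℝ))
    refine this.congr (fun k => ?_)
    field_simp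
  · simp only [half_Saux]
    apply summable_sum
    intro j _
    exact (summable_geo_pow (j+1)).mul_left _

lemma integrableOn_f (k m : ℕ) :
    MeasureTheory.IntegrableOn (fun x : ℝ => x^k * (Real.log x)^m)
      (Set.Ioc (1/2:ℝ) 1) MeasureTheory.volume := by
  have hc : ContinuousOn (fun x : ℝ => x^k * (Real.log x)^m) (Set.Icc (1/2:ℝ) 1) := by
    apply ContinuousOn.mul (continuousOn_pow k)
    apply ContinuousOn.pow
    apply Real.continuousOn_log.mono
    intro x hx
    have : (0:ℝ) < x := lt_of_lt_of_le (by norm_num) hx.1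
    exact this.ne'
  exact (hc.integrableOn_Icc).mono_set Set.Ioc_subset_Icc_self

lemma norm_integral_f (k m : ℕ) :
    ∫ x in Set.Ioc (1/2:ℝ) 1, ‖x^k * (Real.log x)^m‖ = (-1:ℝ)^m * caux m k := by
  rw [← intervalIntegral.integral_of_le (by norm_num : (1/2:ℝ) ≤ 1)]
  have : ∫ x in (1/2:ℝ)..1, ‖x^k * (Real.log x)^m‖
      = ∫ x in (1/2:ℝ)..1, (-1:ℝ)^m * (x^k * (Real.log x)^m) := by
    apply intervalIntegral.integral_congr
    intro x hx
    rw [Set.uIcc_of_le (by norm_num : (1/2:ℝ) ≤ 1)] at hx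
    have hx0 : (0:ℝ) < x := lt_of_lt_of_le (by norm_num) hx.1
    have hlog : Real.log x ≤ 0 := Real.log_nonpos (le_of_lt hx0) hx.2
    have hxk : (0:ℝ) ≤ x^k := by positivity
    show ‖x ^ k * Real.log x ^ m‖ = (-1:ℝ)^m * (x^k * Real.log x^m)
    rw [Real.norm_eq_abs, abs_mul, abs_of_nonneg hxk, abs_pow]
    rw [abs_of_nonpos hlog]
    ring
  rw [this, intervalIntegral.integral_const_mul, Jval]

lemma polylog_eq (n : ℕ) : polylog n (1/2) = ∑' k : ℕ, (1/2:ℝ)^(k+1) / ((k:ℝ)+1)^n := rfl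

lemma polylog_one : polylog 1 (1/2) = Real.log 2 := by
  have h := Real.hasSum_pow_div_log_of_abs_lt_one (x := (1/2:ℝ))
    (by rw [abs_of_nonneg (by norm_num)]; norm_num)
  have h2 : (∑' k : ℕ, (1/2:ℝ)^(k+1) / ((k:ℝ)+1)) = -Real.log (1 - 1/2) := h.tsum_eq
  rw [polylog_eq]
  simp only [pow_one]
  rw [h2, show (1:ℝ)-1/2 = 1/2 by norm_num, one_div, Real.log_inv, neg_neg]

lemma summable_B (m : ℕ) : Summable (fun k : ℕ => (1/2:ℝ)^(k+1) * Saux m k) := by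
  simp only [half_Saux]
  exact summable_sum (fun j _ => (summable_geo_pow (j+1)).mul_left _)

lemma tsum_caux (m : ℕ) (hm : 1 ≤ m) :
    ∑' k : ℕ, caux m k
      = (-(Real.log 2)) ^ (m + 1)
        + (-1 : ℝ) ^ m * m.factorial * (∑' n : ℕ, (1 : ℝ) / ((n : ℝ) + 1) ^ (m + 1))
        + (-1 : ℝ) ^ (m - 1) * ∑ s ∈ Finset.Icc 1 m,
            (m.descFactorial s : ℝ) * (Real.log 2) ^ (m - s) * polylog (s + 1) (1 / 2) := by
  have hA : Summable (fun k : ℕ => (-1:ℝ)^m * (m.factorial : ℝ) / ((k:ℝ)+1)^(m+1)) := by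
    have := (summable_inv_pow (n := m+1) (by omega)).mul_left ((-1:ℝ)^m * (m.factorial:ℝ))
    refine this.congr (fun k => ?_); field_simp
  have e0 : ∑' k : ℕ, caux m k
      = (∑' k : ℕ, (-1:ℝ)^m * (m.factorial : ℝ) / ((k:ℝ)+1)^(m+1))
        - ∑' k : ℕ, (1/2:ℝ)^(k+1) * Saux m k := Summable.tsum_sub hA (summable_B m)
  have e1 : (∑' k : ℕ, (-1:ℝ)^m * (m.factorial : ℝ) / ((k:ℝ)+1)^(m+1))
      = (-1:ℝ)^m * (m.factorial : ℝ) * (∑' n : ℕ, (1:ℝ) / ((n:ℝ)+1)^(m+1)) := by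
    rw [← tsum_mul_left]
    refine tsum_congr (fun k => ?_); field_simp
  have e2 : (∑' k : ℕ, (1/2:ℝ)^(k+1) * Saux m k)
      = ∑ j ∈ Finset.range (m+1),
          ((-1:ℝ)^j * (m.descFactorial j : ℝ) * (-(Real.log 2))^(m-j)) * polylog (j+1) (1/2) := by
    rw [tsum_congr (fun k => half_Saux m k),
      Summable.tsum_finsetSum (fun j _ => (summable_geo_pow (j+1)).mul_left _)]
    refine Finset.sum_congr rfl (fun j _ => ?_)
    rw [polylog_eq, ← tsum_mul_left]
  have hsplit : Finset.range (m+1) = insert 0 (Finset.Icc 1 m) := by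
    ext x; simp; omega
  rw [e0, e1, e2, hsplit, Finset.sum_insert (by simp)]
  simp only [pow_zero, Nat.descFactorial_zero, Nat.cast_one, one_mul, Nat.sub_zero,
    polylog_one]
  have hterm : ∀ s ∈ Finset.Icc 1 m,
      ((-1:ℝ)^s * (m.descFactorial s : ℝ) * (-(Real.log 2))^(m-s)) * polylog (s+1) (1/2)
      = -((-1:ℝ)^(m-1) * ((m.descFactorial s : ℝ) * (Real.log 2)^(m-s) * polylog (s+1) (1/2))) := by
    intro s hs
    rw [Finset.mem_Icc] at hs
    have h1 : (-(Real.log 2))^(m-s) = (-1:ℝ)^(m-s) * (Real.log 2)^(m-s) := by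
      rw [neg_pow]
    have h2 : (-1:ℝ)^s * (-1:ℝ)^(m-s) = (-1:ℝ)^m := by
      rw [← pow_add]; congr 1; omega
    have h3 : (-1:ℝ)^m = -(-1:ℝ)^(m-1) := by
      have : m = (m-1) + 1 := by omega
      rw [this, pow_succ]
      simp
    rw [h1]
    calc ((-1:ℝ)^s * (m.descFactorial s : ℝ) * ((-1:ℝ)^(m-s) * (Real.log 2)^(m-s))) * polylog (s+1) (1/2)
        = ((-1:ℝ)^s * (-1:ℝ)^(m-s)) * ((m.descFactorial s : ℝ) * (Real.log 2)^(m-s) * polylog (s+1) (1/2)) := by ring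
      _ = -((-1:ℝ)^(m-1) * ((m.descFactorial s : ℝ) * (Real.log 2)^(m-s) * polylog (s+1) (1/2))) := by
          rw [h2, h3]; ring
  rw [Finset.sum_congr rfl hterm, Finset.sum_neg_distrib, ← Finset.mul_sum]
  have hm' : m = (m-1) + 1 := by omega
  have hpow : (-(Real.log 2))^(m+1) = -((-(Real.log 2))^m * Real.log 2) := by
    rw [pow_succ]; ring
  rw [hpow, polylog_one]
  ring


theorem log_pow_integral (m : ℕ) (hm : 1 ≤ m) :
    ∫ t in (0 : ℝ)..(1 / 2), (Real.log (1 - t)) ^ m / t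
      = (-(Real.log 2)) ^ (m + 1)
        + (-1 : ℝ) ^ m * m.factorial * (∑' n : ℕ, (1 : ℝ) / ((n : ℝ) + 1) ^ (m + 1))
        + (-1 : ℝ) ^ (m - 1) * ∑ s ∈ Finset.Icc 1 m,
            (m.descFactorial s : ℝ) * (Real.log 2) ^ (m - s) * polylog (s + 1) (1 / 2) := by
  have h0 : (∫ t in (0:ℝ)..(1/2), (Real.log (1 - t))^m / t)
      = ∫ t in (0:ℝ)..(1/2), (fun x => (Real.log x)^m / (1 - x)) (1 - t) := by
    refine intervalIntegral.integral_congr (fun t _ => ?_)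
    show (Real.log (1 - t))^m / t = (Real.log (1-t))^m / (1 - (1-t))
    rw [show (1:ℝ) - (1-t) = t by ring]
  rw [h0, intervalIntegral.integral_comp_sub_left (fun x => (Real.log x)^m / (1 - x)) 1]
  norm_num only
  rw [intervalIntegral.integral_of_le (by norm_num : (1/2:ℝ) ≤ 1)]
  have hpt : Set.EqOn (fun x : ℝ => (Real.log x)^m / (1 - x))
      (fun x : ℝ => ∑' k : ℕ, x^k * (Real.log x)^m) (Set.Ioc (1/2:ℝ) 1) := by
    intro x hx
    simp only
    rcases eq_or_lt_of_le hx.2 with h1 | h1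
    · rw [h1]
      simp [zero_pow (by omega : m ≠ 0)]
    · have hx0 : (0:ℝ) ≤ x := le_of_lt (lt_of_lt_of_le (by norm_num) (le_of_lt hx.1))
      rw [tsum_mul_right, tsum_geometric_of_lt_one hx0 h1]
      rw [div_eq_mul_inv, mul_comm]
  rw [MeasureTheory.setIntegral_congr_fun measurableSet_Ioc hpt]
  have hint : ∀ k : ℕ, MeasureTheory.Integrable (fun x : ℝ => x^k * (Real.log x)^m)
      (MeasureTheory.volume.restrict (Set.Ioc (1/2:ℝ) 1)) := fun k => integrableOn_f k m
  have hsum : Summable (fun k : ℕ =>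
      ∫ x in Set.Ioc (1/2:ℝ) 1, ‖x^k * (Real.log x)^m‖) := by
    refine (((summable_caux hm).mul_left ((-1:ℝ)^m)).congr (fun k => ?_))
    exact (norm_integral_f k m).symm
  rw [← MeasureTheory.integral_tsum_of_summable_integral_norm hint hsum]
  have hval : ∀ k : ℕ, (∫ x in Set.Ioc (1/2:ℝ) 1, x^k * (Real.log x)^m) = caux m k := by
    intro k
    rw [← intervalIntegral.integral_of_le (by norm_num : (1/2:ℝ) ≤ 1), Jval]
  rw [tsum_congr hval, tsum_caux m hm]
end
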